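/- For λ > 0, λ ≠ 1, define ν̃(t,x) = [(e^t−1)(λ−1)/(e^{t(λ−1)}−1)]·(1+x(e^t−1))^{λ−2} on [0,1]. If λ < 1 then ∫₀¹ x·ν̃(t,x)dx → 0 as t → ∞; if λ > 1 then ν̃(t,1) → λ−1 and ∫₀¹ x·ν̃(t,x)dx → (λ−1)/λ as t → ∞. -/

import Mathlib

open Filter MeasureTheory

-- helper: exp(t*c) → 0 when c < 0
lemma expc_zero {c : ℝ} (hc : c < 0) :
    Tendsto (fun t : ℝ => Real.exp (t * c)) atTop (nhds 0) :=
  Real.tendsto_exp_atBot.comp ((tendsto_mul_const_atBot_of_neg hc).mpr tendsto_id)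

lemma expn_zero {c : ℝ} (hc : 0 < c) :
    Tendsto (fun t : ℝ => Real.exp (-(t * c))) atTop (nhds 0) := by
  simpa [mul_neg] using expc_zero (show -c < 0 by linarith)

lemma eval_int {a lam : ℝ} (ha : 0 < a) (h0 : lam ≠ 0) (h1 : lam ≠ 1) :
    ∫ x in (0:ℝ)..1, x * (1 + x * a) ^ (lam - 2)
      = ((1 + a) ^ lam - 1) / (a ^ 2 * lam)
        - ((1 + a) ^ (lam - 1) - 1) / (a ^ 2 * (lam - 1)) := by
  have key : ∀ x ∈ Set.uIcc (0:ℝ) 1,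
      HasDerivAt (fun x : ℝ =>
        (1 + x * a) ^ lam / (a ^ 2 * lam) - (1 + x * a) ^ (lam - 1) / (a ^ 2 * (lam - 1)))
        (x * (1 + x * a) ^ (lam - 2)) x := by
    intro x hx
    rw [Set.uIcc_of_le (by norm_num : (0:ℝ) ≤ 1)] at hx
    have hpos : 0 < 1 + x * a := by nlinarith [hx.1, hx.2, ha]
    have hin : HasDerivAt (fun x : ℝ => 1 + x * a) a x := by
      simpa using ((hasDerivAt_id x).mul_const a).const_add 1
    have d1 : HasDerivAt (fun x : ℝ => (1 + x * a) ^ lam)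
        (lam * (1 + x * a) ^ (lam - 1) * a) x :=
      by have := (Real.hasDerivAt_rpow_const (p := lam) (Or.inl hpos.ne')).comp x hin; exact this
    have d2 : HasDerivAt (fun x : ℝ => (1 + x * a) ^ (lam - 1))
        ((lam - 1) * (1 + x * a) ^ (lam - 1 - 1) * a) x :=
      by have := (Real.hasDerivAt_rpow_const (p := lam - 1) (Or.inl hpos.ne')).comp x hin; exact this
    have := (d1.div_const (a ^ 2 * lam)).sub (d2.div_const (a ^ 2 * (lam - 1)))
    refine this.congr_deriv ?_
    have e1 : (1 + x * a) ^ (lam - 1) = (1 + x * a) ^ (lam - 2) * (1 + x * a) := by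
      rw [← Real.rpow_add_one hpos.ne']; ring_nf
    have e2 : lam - 1 - 1 = lam - 2 := by ring
    rw [e2, e1]
    have hl1 : lam - 1 ≠ 0 := sub_ne_zero.mpr h1
    field_simp
    ring
  have hcont : ContinuousOn (fun x : ℝ => x * (1 + x * a) ^ (lam - 2)) (Set.uIcc 0 1) := by
    apply continuousOn_id.mul
    apply ContinuousOn.rpow_const
    · exact (continuous_const.add (continuous_id.mul continuous_const)).continuousOn
    · intro x hx
      rw [Set.uIcc_of_le (by norm_num : (0:ℝ) ≤ 1)] at hx
      left
      nlinarith [hx.1, hx.2, ha]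
  rw [intervalIntegral.integral_eq_sub_of_hasDerivAt key hcont.intervalIntegrable]
  have hl1 : lam - 1 ≠ 0 := sub_ne_zero.mpr h1
  norm_num [Real.one_rpow]
  field_simp
  ring

set_option maxHeartbeats 1000000 in
theorem stmt9 (lam : ℝ) (hlam : 0 < lam) (hne : lam ≠ 1) :
    (lam < 1 →
      Tendsto (fun t : ℝ => ∫ x in (0:ℝ)..1,
          x * ((Real.exp t - 1) * (lam - 1) / (Real.exp (t * (lam - 1)) - 1) *
            (1 + x * (Real.exp t - 1)) ^ (lam - 2)))
        atTop (nhds 0)) ∧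
    (1 < lam →
      Tendsto (fun t : ℝ =>
          (Real.exp t - 1) * (lam - 1) / (Real.exp (t * (lam - 1)) - 1) *
            (1 + 1 * (Real.exp t - 1)) ^ (lam - 2))
        atTop (nhds (lam - 1)) ∧
      Tendsto (fun t : ℝ => ∫ x in (0:ℝ)..1,
          x * ((Real.exp t - 1) * (lam - 1) / (Real.exp (t * (lam - 1)) - 1) *
            (1 + x * (Real.exp t - 1)) ^ (lam - 2)))
        atTop (nhds ((lam - 1) / lam))) := by
  have h0 : lam ≠ 0 := ne_of_gt hlam
  have hl1 : lam - 1 ≠ 0 := sub_ne_zero.mpr hne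
  -- Common facts for t > 0
  -- explicit value of the integral for t > 0
  have hval : ∀ t : ℝ, 0 < t →
      (∫ x in (0:ℝ)..1,
          x * ((Real.exp t - 1) * (lam - 1) / (Real.exp (t * (lam - 1)) - 1) *
            (1 + x * (Real.exp t - 1)) ^ (lam - 2)))
        = (lam - 1) / lam *
            ((Real.exp t * Real.exp (t * (lam - 1)) - 1) /
              ((Real.exp t - 1) * (Real.exp (t * (lam - 1)) - 1)))
          - 1 / (Real.exp t - 1) := by
    intro t ht
    have hXgt : 1 < Real.exp t := Real.one_lt_exp_iff.mpr ht
    have ha : 0 < Real.exp t - 1 := by linarith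
    have hX1 : Real.exp t - 1 ≠ 0 := ne_of_gt ha
    have hE1 : Real.exp (t * (lam - 1)) - 1 ≠ 0 := by
      intro h
      have : Real.exp (t * (lam - 1)) = 1 := by linarith
      exact mul_ne_zero (ne_of_gt ht) hl1 ((Real.exp_eq_one_iff _).mp this)
    set C := (Real.exp t - 1) * (lam - 1) / (Real.exp (t * (lam - 1)) - 1) with hC
    have step1 : (∫ x in (0:ℝ)..1,
        x * (C * (1 + x * (Real.exp t - 1)) ^ (lam - 2)))
        = C * ∫ x in (0:ℝ)..1, x * (1 + x * (Real.exp t - 1)) ^ (lam - 2) := by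
      rw [← intervalIntegral.integral_const_mul]
      congr 1; funext x; ring
    rw [step1, eval_int ha h0 hne]
    have e1 : 1 + (Real.exp t - 1) = Real.exp t := by ring
    have e2 : (Real.exp t) ^ lam = Real.exp (t * lam) := (Real.exp_mul t lam).symm
    have e3 : (Real.exp t) ^ (lam - 1) = Real.exp (t * (lam - 1)) :=
      (Real.exp_mul t (lam - 1)).symm
    have e4 : Real.exp (t * lam) = Real.exp t * Real.exp (t * (lam - 1)) := by
      rw [← Real.exp_add]; ring_nf
    rw [e1, e2, e3, e4, hC]
    field_simp
    rw [div_sub' (by rwa [mul_comm] at hE1)]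
    ring
  constructor
  · -- lam < 1
    intro hlt
    have hEc : lam - 1 < 0 := by linarith
    -- target function
    have key : Tendsto (fun t : ℝ =>
        (lam - 1) / lam *
          ((Real.exp (t * (lam - 1)) - Real.exp (-(t * 1))) /
            ((1 - Real.exp (-(t * 1))) * (Real.exp (t * (lam - 1)) - 1)))
          - Real.exp (-(t * 1)) / (1 - Real.exp (-(t * 1)))) atTop (nhds 0) := by
      have h1 := expc_zero hEc
      have h2 := expn_zero (show (0:ℝ) < 1 by norm_num)
      have hnum : Tendsto (fun t : ℝ => Real.exp (t * (lam - 1)) - Real.exp (-(t * 1)))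
          atTop (nhds 0) := by simpa using h1.sub h2
      have hden : Tendsto (fun t : ℝ =>
          (1 - Real.exp (-(t * 1))) * (Real.exp (t * (lam - 1)) - 1)) atTop
          (nhds ((1 - 0) * (0 - 1))) := (tendsto_const_nhds.sub h2).mul (h1.sub tendsto_const_nhds)
      have hq : Tendsto (fun t : ℝ =>
          (Real.exp (t * (lam - 1)) - Real.exp (-(t * 1))) /
            ((1 - Real.exp (-(t * 1))) * (Real.exp (t * (lam - 1)) - 1)))
          atTop (nhds (0 / ((1 - 0) * (0 - 1)))) :=
        hnum.div hden (by norm_num)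
      have hq2 : Tendsto (fun t : ℝ => Real.exp (-(t * 1)) / (1 - Real.exp (-(t * 1))))
          atTop (nhds (0 / (1 - 0))) := h2.div (tendsto_const_nhds.sub h2) (by norm_num)
      have := (hq.const_mul ((lam - 1) / lam)).sub hq2
      simpa using this
    refine Tendsto.congr' ?_ key
    filter_upwards [eventually_gt_atTop 0] with t ht
    rw [hval t ht]
    have hXgt : 1 < Real.exp t := Real.one_lt_exp_iff.mpr ht
    have hX1 : Real.exp t - 1 ≠ 0 := by linarith
    have hX0 : Real.exp t ≠ 0 := (Real.exp_pos t).ne'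
    have hE1 : Real.exp (t * (lam - 1)) - 1 ≠ 0 := by
      intro h
      have : Real.exp (t * (lam - 1)) = 1 := by linarith
      exact mul_ne_zero (ne_of_gt ht) hl1 ((Real.exp_eq_one_iff _).mp this)
    have hiX : (1:ℝ) - Real.exp (-(t * 1)) ≠ 0 := by
      have : Real.exp (-(t * 1)) < 1 := by
        rw [Real.exp_lt_one_iff]; linarith
      linarith
    have eneg : Real.exp (-(t * 1)) = (Real.exp t)⁻¹ := by
      rw [mul_one, Real.exp_neg]
    rw [eneg]
    have hiX' : (1:ℝ) - (Real.exp t)⁻¹ ≠ 0 := by rw [← eneg]; exact hiX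
    field_simp
    all_goals (first | ring1 | exact Or.inl (Or.inl (mul_comm _ _)) | tauto | simp)
  · -- 1 < lam
    intro hgt
    have hEc : 0 < lam - 1 := by linarith
    constructor
    · -- pointwise limit
      have key : Tendsto (fun t : ℝ =>
          (lam - 1) * ((1 - Real.exp (-(t * 1))) / (1 - Real.exp (-(t * (lam - 1))))))
          atTop (nhds ((lam - 1) * ((1 - 0) / (1 - 0)))) := by
        have h1 := expn_zero hEc
        have h2 := expn_zero (show (0:ℝ) < 1 by norm_num)
        exact ((tendsto_const_nhds.sub h2).div (tendsto_const_nhds.sub h1)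
          (by norm_num)).const_mul _
      have key' : Tendsto (fun t : ℝ =>
          (lam - 1) * ((1 - Real.exp (-(t * 1))) / (1 - Real.exp (-(t * (lam - 1))))))
          atTop (nhds (lam - 1)) := by simpa using key
      refine Tendsto.congr' ?_ key'
      filter_upwards [eventually_gt_atTop 0] with t ht
      have hXgt : 1 < Real.exp t := Real.one_lt_exp_iff.mpr ht
      have hX0 : Real.exp t ≠ 0 := (Real.exp_pos t).ne'
      have hE0 : Real.exp (t * (lam - 1)) ≠ 0 := (Real.exp_pos _).ne'
      have hE1 : Real.exp (t * (lam - 1)) - 1 ≠ 0 := by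
        have : 1 < Real.exp (t * (lam - 1)) :=
          Real.one_lt_exp_iff.mpr (by positivity)
        linarith
      have e1 : 1 + 1 * (Real.exp t - 1) = Real.exp t := by ring
      have e2 : (Real.exp t) ^ (lam - 2) = Real.exp (t * (lam - 2)) :=
        (Real.exp_mul t (lam - 2)).symm
      have e4 : Real.exp (t * (lam - 2)) = Real.exp (t * (lam - 1)) / Real.exp t := by
        rw [← Real.exp_sub]; ring_nf
      have en1 : Real.exp (-(t * 1)) = (Real.exp t)⁻¹ := by rw [mul_one, Real.exp_neg]
      have en2 : Real.exp (-(t * (lam - 1))) = (Real.exp (t * (lam - 1)))⁻¹ := Real.exp_neg _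
      rw [e1, e2, en1, en2, e4]
      have hiX : (1:ℝ) - (Real.exp t)⁻¹ ≠ 0 := by
        have : (Real.exp t)⁻¹ < 1 := by
          rw [inv_lt_one_iff₀]; right; exact hXgt
        linarith
      have hiE : (1:ℝ) - (Real.exp (t * (lam - 1)))⁻¹ ≠ 0 := by
        have : (Real.exp (t * (lam - 1)))⁻¹ < 1 := by
          rw [inv_lt_one_iff₀]; right; exact Real.one_lt_exp_iff.mpr (by positivity)
        linarith
      field_simp
      all_goals (first | ring1 | exact Or.inl (Or.inl (mul_comm _ _)) | tauto | simp)
    · -- integral limit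
      have key : Tendsto (fun t : ℝ =>
          (lam - 1) / lam *
            ((1 - Real.exp (-(t * lam))) /
              ((1 - Real.exp (-(t * 1))) * (1 - Real.exp (-(t * (lam - 1))))))
            - Real.exp (-(t * 1)) / (1 - Real.exp (-(t * 1)))) atTop
          (nhds ((lam - 1) / lam)) := by
        have h1 := expn_zero hEc
        have h2 := expn_zero (show (0:ℝ) < 1 by norm_num)
        have h3 := expn_zero hlam
        have hq : Tendsto (fun t : ℝ =>
            (1 - Real.exp (-(t * lam))) /
              ((1 - Real.exp (-(t * 1))) * (1 - Real.exp (-(t * (lam - 1))))))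
            atTop (nhds ((1 - 0) / ((1 - 0) * (1 - 0)))) :=
          (tendsto_const_nhds.sub h3).div
            ((tendsto_const_nhds.sub h2).mul (tendsto_const_nhds.sub h1)) (by norm_num)
        have hq2 : Tendsto (fun t : ℝ => Real.exp (-(t * 1)) / (1 - Real.exp (-(t * 1))))
            atTop (nhds (0 / (1 - 0))) := h2.div (tendsto_const_nhds.sub h2) (by norm_num)
        have := (hq.const_mul ((lam - 1) / lam)).sub hq2
        simpa using this
      refine Tendsto.congr' ?_ key
      filter_upwards [eventually_gt_atTop 0] with t ht
      rw [hval t ht]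
      have hXgt : 1 < Real.exp t := Real.one_lt_exp_iff.mpr ht
      have hX1 : Real.exp t - 1 ≠ 0 := by linarith
      have hX0 : Real.exp t ≠ 0 := (Real.exp_pos t).ne'
      have hE0 : Real.exp (t * (lam - 1)) ≠ 0 := (Real.exp_pos _).ne'
      have hEgt : 1 < Real.exp (t * (lam - 1)) := Real.one_lt_exp_iff.mpr (by positivity)
      have hE1 : Real.exp (t * (lam - 1)) - 1 ≠ 0 := by linarith
      have en1 : Real.exp (-(t * 1)) = (Real.exp t)⁻¹ := by rw [mul_one, Real.exp_neg]
      have en2 : Real.exp (-(t * (lam - 1))) = (Real.exp (t * (lam - 1)))⁻¹ := Real.exp_neg _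
      have en3 : Real.exp (-(t * lam)) =
          (Real.exp t * Real.exp (t * (lam - 1)))⁻¹ := by
        rw [Real.exp_neg, ← Real.exp_add]; ring_nf
      rw [en1, en2, en3]
      have hiX : (1:ℝ) - (Real.exp t)⁻¹ ≠ 0 := by
        have : (Real.exp t)⁻¹ < 1 := by rw [inv_lt_one_iff₀]; right; exact hXgt
        linarith
      have hiE : (1:ℝ) - (Real.exp (t * (lam - 1)))⁻¹ ≠ 0 := by
        have : (Real.exp (t * (lam - 1)))⁻¹ < 1 := by
          rw [inv_lt_one_iff₀]; right; exact hEgt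
        linarith
      field_simp
      all_goals (first | ring1 | exact Or.inl (Or.inl (mul_comm _ _)) | tauto | simp)
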